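/- Let 1 < p < ∞ and let (Ω,μ) be a measure space. If f is a measurable function on Ω with f**(∞) = lim_{t→∞} f**(t) = 0, then ‖f‖_{L(p,∞)} ≤ p · ‖f‖^#_{L(p,∞)}, i.e. sup_{t>0} t^{1/p} f**(t) ≤ p · sup_{s>0} s^{1/p}( f**(s) − f*(s) ). -/

import Mathlib

open MeasureTheory Set
open scoped ENNReal NNReal

noncomputable section

/-- The distribution function `λ_f(t) = μ {x : |f(x)| > t}`. -/
def distFun {α : Type*} [MeasurableSpace α] (μ : Measure α) (f : α → ℝ) (t : ℝ) : ℝ≥0∞ :=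
  μ {x | t < |f x|}

/-- The non-increasing rearrangement `f*(t) = inf {s > 0 : λ_f(s) ≤ t}`. -/
def rearr {α : Type*} [MeasurableSpace α] (μ : Measure α) (f : α → ℝ) (t : ℝ) : ℝ≥0∞ :=
  sInf (ENNReal.ofReal '' {s : ℝ | 0 < s ∧ distFun μ f s ≤ ENNReal.ofReal t})

/-- The maximal function `f**(t) = (1/t) ∫₀ᵗ f*(s) ds`. -/
def dstar {α : Type*} [MeasurableSpace α] (μ : Measure α) (f : α → ℝ) (t : ℝ) : ℝ≥0∞ :=
  (∫⁻ s in Set.Ioc (0 : ℝ) t, rearr μ f s) / ENNReal.ofReal t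

/-- The `L(∞,∞)` "norm" : `sup_{t>0} (f**(t) - f*(t))`. -/
def oscNorm {α : Type*} [MeasurableSpace α] (μ : Measure α) (f : α → ℝ) : ℝ≥0∞ :=
  ⨆ (t : ℝ) (_ : 0 < t), dstar μ f t - rearr μ f t

/-- The Marcinkiewicz `L(p,∞)` quasinorm `‖f‖*_{L(p,∞)} = sup_{t>0} t (λ_f(t))^{1/p}`. -/
def wkNorm {α : Type*} [MeasurableSpace α] (μ : Measure α) (p : ℝ) (f : α → ℝ) : ℝ≥0∞ :=
  ⨆ (t : ℝ) (_ : 0 < t), ENNReal.ofReal t * distFun μ f t ^ (1 / p)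

/-- `‖f‖_{L(p,∞)} = sup_{s>0} s^{1/p} f**(s)`. -/
def wkNormStarStar {α : Type*} [MeasurableSpace α] (μ : Measure α) (p : ℝ) (f : α → ℝ) : ℝ≥0∞ :=
  ⨆ (s : ℝ) (_ : 0 < s), ENNReal.ofReal s ^ (1 / p) * dstar μ f s

/-- `‖f‖*_{L(p,∞)} = sup_{s>0} s^{1/p} f*(s)` (rearrangement form). -/
def wkNormStar {α : Type*} [MeasurableSpace α] (μ : Measure α) (p : ℝ) (f : α → ℝ) : ℝ≥0∞ :=
  ⨆ (s : ℝ) (_ : 0 < s), ENNReal.ofReal s ^ (1 / p) * rearr μ f s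

/-- `‖f‖^#_{L(p,∞)} = sup_{s>0} s^{1/p} (f**(s) - f*(s))`. -/
def sharpNorm {α : Type*} [MeasurableSpace α] (μ : Measure α) (p : ℝ) (f : α → ℝ) : ℝ≥0∞ :=
  ⨆ (s : ℝ) (_ : 0 < s), ENNReal.ofReal s ^ (1 / p) * (dstar μ f s - rearr μ f s)

/-- `‖f‖^{##}_{L(p,∞)} = sup_{t>0} (λ_f(t))^{-(1-1/p)} ∫_t^∞ λ_f(s) ds`. -/
def sharpSharpNorm {α : Type*} [MeasurableSpace α] (μ : Measure α) (p : ℝ) (f : α → ℝ) : ℝ≥0∞ :=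
  ⨆ (t : ℝ) (_ : 0 < t),
    distFun μ f t ^ (-(1 - 1 / p)) * ∫⁻ s in Set.Ioi t, distFun μ f s

/-- `‖f‖^{##}_{L(∞,∞)} = inf {C : ∫_t^∞ λ_f(s) ds ≤ C λ_f(t) for all t > 0}`. -/
def sharpSharpInf {α : Type*} [MeasurableSpace α] (μ : Measure α) (f : α → ℝ) : ℝ≥0∞ :=
  sInf {C : ℝ≥0∞ | ∀ t : ℝ, 0 < t →
    ∫⁻ s in Set.Ioi t, distFun μ f s ≤ C * distFun μ f t}

/-- O'Neil's quantity `inf {C^{1/p} : ∫_t^∞ λ_f(s) ds ≤ C t^{1-p} for all t > 0}`. -/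
def oneilQuantity {α : Type*} [MeasurableSpace α] (μ : Measure α) (p : ℝ) (f : α → ℝ) : ℝ≥0∞ :=
  sInf {D : ℝ≥0∞ | ∃ C : ℝ≥0∞, D = C ^ (1 / p) ∧
    ∀ t : ℝ, 0 < t → ∫⁻ s in Set.Ioi t, distFun μ f s ≤ C * ENNReal.ofReal t ^ (1 - p)}

/-- A cube in `ℝⁿ` with sides parallel to the coordinate axes. -/
def IsCube {n : ℕ} (Q : Set (Fin n → ℝ)) : Prop :=
  ∃ (a : Fin n → ℝ) (l : ℝ), 0 < l ∧ Q = Set.univ.pi fun i => Set.Icc (a i) (a i + l)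

/-- A countable family of subcubes of `Q₀` with pairwise disjoint interiors. -/
def IsPackingIn {n : ℕ} (Q₀ : Set (Fin n → ℝ)) (Q : ℕ → Set (Fin n → ℝ)) : Prop :=
  (∀ i, IsCube (Q i) ∧ Q i ⊆ Q₀) ∧
    Pairwise fun i j => interior (Q i) ∩ interior (Q j) = ∅

/-- The average `f_Q = (1/|Q|) ∫_Q f`. -/
def cubeAvg {n : ℕ} (f : (Fin n → ℝ) → ℝ) (Q : Set (Fin n → ℝ)) : ℝ :=
  ⨍ x in Q, f x

/-- The mean oscillation `(1/|Q|) ∫_Q |f - f_Q|`. -/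
def meanOsc {n : ℕ} (f : (Fin n → ℝ) → ℝ) (Q : Set (Fin n → ℝ)) : ℝ :=
  ⨍ x in Q, |f x - cubeAvg f Q|

/-- The John–Nirenberg functional `JN_p(f,Q₀)`. -/
def JN {n : ℕ} (p : ℝ) (f : (Fin n → ℝ) → ℝ) (Q₀ : Set (Fin n → ℝ)) : ℝ≥0∞ :=
  ⨆ (Q : ℕ → Set (Fin n → ℝ)) (_ : IsPackingIn Q₀ Q),
    (∑' i, volume (Q i) * ENNReal.ofReal (meanOsc f (Q i)) ^ p) ^ (1 / p)

/-- The BMO norm `‖f‖_{BMO(Q₀)}`. -/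
def bmoNorm {n : ℕ} (f : (Fin n → ℝ) → ℝ) (Q₀ : Set (Fin n → ℝ)) : ℝ≥0∞ :=
  ⨆ (Q : Set (Fin n → ℝ)) (_ : IsCube Q ∧ Q ⊆ Q₀), ENNReal.ofReal (meanOsc f Q)

/-- The Garsia–Rodemich functional `GaRo_p(f,Q₀)`: the least constant `C` such that
for every packing `{Qᵢ}` of `Q₀`,
`Σᵢ (1/|Qᵢ|) ∫_{Qᵢ}∫_{Qᵢ} |f(x)-f(y)| dx dy ≤ C (Σᵢ |Qᵢ|)^{1/p'}` where `1/p' = 1 - 1/p`. -/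
def GaRo {n : ℕ} (p : ℝ) (f : (Fin n → ℝ) → ℝ) (Q₀ : Set (Fin n → ℝ)) : ℝ≥0∞ :=
  sInf {C : ℝ≥0∞ | ∀ Q : ℕ → Set (Fin n → ℝ), IsPackingIn Q₀ Q →
    (∑' i, (volume (Q i))⁻¹ *
        ∫⁻ x in Q i, ∫⁻ y in Q i, ENNReal.ofReal |f x - f y|) ≤
      C * (∑' i, volume (Q i)) ^ (1 - 1 / p)}

section AuxLemmas

open Filter

variable {α : Type*} [MeasurableSpace α] (μ : Measure α) (f : α → ℝ)

lemma rearr_anti : Antitone (rearr μ f) := by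
  intro a b hab
  apply sInf_le_sInf
  apply image_mono
  intro s hs
  exact ⟨hs.1, hs.2.trans (ENNReal.ofReal_le_ofReal hab)⟩

lemma lint_Ioc_ge (a b : ℝ) (hab : a ≤ b) :
    ENNReal.ofReal (b - a) * rearr μ f b ≤ ∫⁻ s in Set.Ioc a b, rearr μ f s := by
  calc ENNReal.ofReal (b - a) * rearr μ f b
      = ∫⁻ _ in Set.Ioc a b, rearr μ f b := by
        rw [setLIntegral_const, Real.volume_Ioc, mul_comm]
    _ ≤ ∫⁻ s in Set.Ioc a b, rearr μ f s :=
        setLIntegral_mono' measurableSet_Ioc fun x hx => rearr_anti μ f hx.2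

lemma lint_split {a b : ℝ} (hab : a ≤ b) (c : ℝ) (hc : c ≤ a) :
    (∫⁻ s in Set.Ioc c b, rearr μ f s)
      = (∫⁻ s in Set.Ioc c a, rearr μ f s) + ∫⁻ s in Set.Ioc a b, rearr μ f s := by
  rw [← Set.Ioc_union_Ioc_eq_Ioc hc hab, lintegral_union measurableSet_Ioc (Set.Ioc_disjoint_Ioc_of_le le_rfl)]

lemma rearr_le_dstar {t : ℝ} (ht : 0 < t) : rearr μ f t ≤ dstar μ f t := by
  rw [dstar, ENNReal.le_div_iff_mul_le (Or.inl (by simp [ht])) (Or.inl ENNReal.ofReal_ne_top)]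
  calc rearr μ f t * ENNReal.ofReal t = ENNReal.ofReal (t - 0) * rearr μ f t := by
        rw [sub_zero, mul_comm]
    _ ≤ _ := lint_Ioc_ge μ f 0 t ht.le

lemma lint_finite (hlim : Filter.Tendsto (dstar μ f) Filter.atTop (nhds 0)) (t : ℝ) :
    (∫⁻ s in Set.Ioc (0:ℝ) t, rearr μ f s) ≠ ∞ := by
  have h1 : ∀ᶠ s in atTop, dstar μ f s < 1 := hlim.eventually_lt_const (by norm_num)
  obtain ⟨T, hT⟩ := h1.exists_forall_of_atTop
  set T' := max T (max t 1) with hT'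
  have hT'1 : (1:ℝ) ≤ T' := le_max_of_le_right (le_max_right _ _)
  have h2 : dstar μ f T' < 1 := hT T' (le_max_left _ _)
  rw [dstar, ENNReal.div_lt_iff (Or.inl (by simp; linarith)) (Or.inl ENNReal.ofReal_ne_top)] at h2
  have h3 : (∫⁻ s in Set.Ioc (0:ℝ) t, rearr μ f s) ≤ ∫⁻ s in Set.Ioc (0:ℝ) T', rearr μ f s :=
    lintegral_mono_set (Set.Ioc_subset_Ioc_right (le_max_of_le_right (le_max_left _ _)))
  exact (h3.trans_lt (h2.trans_le (by simp))).ne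

lemma key_step {t r : ℝ} (ht : 0 < t) (hr : 1 < r) :
    dstar μ f t + ENNReal.ofReal (r - 1) * rearr μ f (r * t)
      ≤ ENNReal.ofReal r * dstar μ f (r * t) := by
  have hrt : 0 < r * t := by positivity
  have h1 : (∫⁻ s in Set.Ioc (0:ℝ) t, rearr μ f s) + ENNReal.ofReal ((r-1)*t) * rearr μ f (r*t)
      ≤ ∫⁻ s in Set.Ioc (0:ℝ) (r*t), rearr μ f s := by
    rw [lint_split μ f (le_mul_of_one_le_left ht.le hr.le) 0 ht.le]
    gcongr
    have := lint_Ioc_ge μ f t (r*t) (le_mul_of_one_le_left ht.le hr.le)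
    calc ENNReal.ofReal ((r-1)*t) * rearr μ f (r*t)
        = ENNReal.ofReal (r*t - t) * rearr μ f (r*t) := by ring_nf
      _ ≤ _ := this
  have h2 := ENNReal.div_le_div_right h1 (ENNReal.ofReal t)
  calc dstar μ f t + ENNReal.ofReal (r - 1) * rearr μ f (r * t)
      = ((∫⁻ s in Set.Ioc (0:ℝ) t, rearr μ f s) + ENNReal.ofReal ((r-1)*t) * rearr μ f (r*t))
          / ENNReal.ofReal t := by
        rw [ENNReal.add_div, dstar]
        congr 1
        rw [ENNReal.ofReal_mul (by linarith : (0:ℝ) ≤ r - 1), mul_right_comm, mul_div_assoc,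
          ENNReal.div_self (by simp [ht]) ENNReal.ofReal_ne_top, mul_one]
    _ ≤ (∫⁻ s in Set.Ioc (0:ℝ) (r*t), rearr μ f s) / ENNReal.ofReal t := h2
    _ = ENNReal.ofReal r * dstar μ f (r * t) := by
        rw [dstar, ENNReal.ofReal_mul (by linarith : (0:ℝ) ≤ r), ← mul_div_assoc,
          ENNReal.mul_div_mul_left _ _ (by simp; linarith) ENNReal.ofReal_ne_top]

lemma step2 {t r : ℝ} (ht : 0 < t) (hr : 1 < r) :
    dstar μ f t ≤ dstar μ f (r*t)
      + ENNReal.ofReal (r-1) * (dstar μ f (r*t) - rearr μ f (r*t)) := by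
  have hrt : (0:ℝ) < r * t := by positivity
  by_cases hR : rearr μ f (r*t) = ∞
  · have hD : dstar μ f (r*t) = ∞ := top_le_iff.mp (hR ▸ rearr_le_dstar μ f hrt)
    simp [hD]
  · have hle := rearr_le_dstar μ f hrt
    have h := key_step μ f ht hr
    have heq : ENNReal.ofReal r * dstar μ f (r*t)
        = (dstar μ f (r*t) + ENNReal.ofReal (r-1) * (dstar μ f (r*t) - rearr μ f (r*t)))
          + ENNReal.ofReal (r-1) * rearr μ f (r*t) := by
      rw [add_assoc, ← mul_add, tsub_add_cancel_of_le hle, ← one_add_mul,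
        ← ENNReal.ofReal_one, ← ENNReal.ofReal_add (by norm_num) (by linarith)]
      norm_num
    rw [heq] at h
    exact (ENNReal.add_le_add_iff_right (ENNReal.mul_ne_top ENNReal.ofReal_ne_top hR)).mp h

lemma sharp_bound (p : ℝ) {s : ℝ} (hs : 0 < s) :
    dstar μ f s - rearr μ f s ≤ sharpNorm μ p f * ENNReal.ofReal (s ^ (-(1/p))) := by
  have h : ENNReal.ofReal s ^ (1/p) * (dstar μ f s - rearr μ f s) ≤ sharpNorm μ p f := by
    rw [sharpNorm]
    exact le_iSup₂ (f := fun (s:ℝ) (_ : 0 < s) =>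
      ENNReal.ofReal s ^ (1/p) * (dstar μ f s - rearr μ f s)) s hs
  calc dstar μ f s - rearr μ f s
      = ENNReal.ofReal (s^(-(1/p))) * (ENNReal.ofReal s ^ (1/p) * (dstar μ f s - rearr μ f s)) := by
        rw [← mul_assoc, ENNReal.ofReal_rpow_of_pos hs, ← ENNReal.ofReal_mul (by positivity),
          ← Real.rpow_add hs, neg_add_cancel, Real.rpow_zero, ENNReal.ofReal_one, one_mul]
    _ ≤ ENNReal.ofReal (s^(-(1/p))) * sharpNorm μ p f := by gcongr
    _ = _ := mul_comm _ _

lemma iterate_bound (p : ℝ) {t r : ℝ} (ht : 0 < t) (hr : 1 < r) (k : ℕ) :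
    dstar μ f t ≤ dstar μ f (r^k * t)
      + ENNReal.ofReal (r-1) * sharpNorm μ p f
          * ENNReal.ofReal (∑ j ∈ Finset.range k, (r^(j+1) * t) ^ (-(1/p))) := by
  induction k with
  | zero => simp
  | succ k ih =>
    have hrk : (0:ℝ) < r^k * t := by positivity
    have h1 := step2 μ f hrk hr
    have h2 := sharp_bound μ f p (s := r * (r^k * t)) (by positivity)
    have hre : r * (r^k*t) = r^(k+1)*t := by ring
    rw [hre] at h1 h2
    calc dstar μ f t ≤ _ := ih
      _ ≤ (dstar μ f (r^(k+1)*t)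
            + ENNReal.ofReal (r-1) * (sharpNorm μ p f * ENNReal.ofReal ((r^(k+1)*t) ^ (-(1/p)))))
          + ENNReal.ofReal (r-1) * sharpNorm μ p f
            * ENNReal.ofReal (∑ j ∈ Finset.range k, (r^(j+1) * t) ^ (-(1/p))) := by
        gcongr
        exact h1.trans (by gcongr)
      _ = _ := by
        rw [Finset.sum_range_succ,
          ENNReal.ofReal_add (Finset.sum_nonneg fun j _ => by positivity) (by positivity)]
        ring

lemma geom_bound {p t r : ℝ} (hp : 0 < 1/p) (ht : 0 < t) (hr : 1 < r) (k : ℕ) :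
    ∑ j ∈ Finset.range k, (r^(j+1) * t) ^ (-(1/p))
      ≤ t^(-(1/p)) * (r^(-(1/p)) / (1 - r^(-(1/p)))) := by
  have hr0 : (0:ℝ) < r := by linarith
  set x := r ^ (-(1/p)) with hx
  have hx0 : 0 < x := Real.rpow_pos_of_pos hr0 _
  have hx1 : x < 1 := Real.rpow_lt_one_of_one_lt_of_neg hr (by linarith)
  have hterm : ∀ j : ℕ, (r^(j+1) * t) ^ (-(1/p)) = t^(-(1/p)) * x^(j+1) := by
    intro j
    rw [Real.mul_rpow (by positivity) ht.le, mul_comm]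
    congr 1
    rw [← Real.rpow_natCast r (j+1), ← Real.rpow_mul hr0.le, mul_comm,
      Real.rpow_mul hr0.le, Real.rpow_natCast]
  calc ∑ j ∈ Finset.range k, (r^(j+1) * t) ^ (-(1/p))
      = t^(-(1/p)) * (x * ∑ j ∈ Finset.range k, x^j) := by
        simp only [hterm]
        rw [← Finset.mul_sum]
        congr 1
        rw [Finset.mul_sum]
        exact Finset.sum_congr rfl fun j _ => by ring
    _ ≤ t^(-(1/p)) * (x * (1-x)⁻¹) := by
        have hgeom : (∑ j ∈ Finset.range k, x^j) ≤ (1-x)⁻¹ := by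
          rw [inv_eq_one_div, le_div_iff₀ (by linarith)]
          have := geom_sum_mul x k
          nlinarith [pow_nonneg hx0.le k]
        gcongr
    _ = t^(-(1/p)) * (x / (1-x)) := by ring

lemma C_tendsto {p : ℝ} (hp : 1 < p) :
    Tendsto (fun r : ℝ => (r-1) * (r^(-(1/p)) / (1 - r^(-(1/p))))) (nhdsWithin 1 (Set.Ioi 1))
      (nhds p) := by
  have hp0 : (0:ℝ) < 1/p := by positivity
  have hd : HasDerivAt (fun x:ℝ => x ^ (1/p)) (1/p) 1 := by
    have := Real.hasDerivAt_rpow_const (x := (1:ℝ)) (p := 1/p) (Or.inl one_ne_zero)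
    simpa using this
  have h2 : Tendsto (slope (fun x:ℝ => x^(1/p)) 1) (nhdsWithin 1 (Set.Ioi 1)) (nhds (1/p)) :=
    (hasDerivAt_iff_tendsto_slope.mp hd).mono_left
      (nhdsWithin_mono _ (fun x hx => ne_of_gt hx))
  have h3 := h2.inv₀ (by positivity)
  rw [one_div, inv_inv] at h3
  apply h3.congr'
  filter_upwards [self_mem_nhdsWithin] with r (hr : 1 < r)
  have hr0 : (0:ℝ) < r := by linarith
  have hrp : 1 < r ^ (1/p) := Real.one_lt_rpow_iff_of_pos hr0 |>.mpr (Or.inl ⟨hr, hp0⟩)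
  have hne : r ^ (1/p) - 1 ≠ 0 := by linarith
  rw [slope_def_field]
  have hxinv : r ^ (-(1/p)) = (r ^ (1/p))⁻¹ := by
    rw [← Real.rpow_neg_one (r ^ (1/p)), ← Real.rpow_mul hr0.le]; ring_nf
  rw [hxinv]
  have hrpne : r ^ (1/p) ≠ 0 := by positivity
  field_simp
  rw [Real.one_rpow, mul_div_assoc, div_self hne, mul_one]


end AuxLemmas

/-- if `f**(∞) = 0` then `‖f‖_{L(p,∞)} ≤ p ‖f‖^#_{L(p,∞)}`, i.e.
`sup_{t>0} t^{1/p} f**(t) ≤ p · sup_{s>0} s^{1/p} (f**(s) - f*(s))`. -/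
theorem wkNorm_le_sharpNorm {α : Type*} [MeasurableSpace α] (μ : Measure α)
    (p : ℝ) (hp : 1 < p) (f : α → ℝ) (hf : Measurable f)
    (hlim : Filter.Tendsto (dstar μ f) Filter.atTop (nhds 0)) :
    wkNormStarStar μ p f ≤ ENNReal.ofReal p * sharpNorm μ p f := by
  set N := sharpNorm μ p f with hN
  by_cases hNtop : N = ∞
  · rw [hNtop, ENNReal.mul_top (by simp; linarith)]
    exact le_top
  · rw [wkNormStarStar]
    apply iSup₂_le
    intro t ht
    have hp0 : (0:ℝ) < 1/p := by positivity
    have hmain : ∀ r : ℝ, 1 < r →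
        ENNReal.ofReal t ^ (1/p) * dstar μ f t
          ≤ ENNReal.ofReal ((r-1) * (r^(-(1/p)) / (1 - r^(-(1/p))))) * N := by
      intro r hr
      set x := r ^ (-(1/p)) with hxd
      have hr0 : (0:ℝ) < r := by linarith
      have hx0 : 0 < x := Real.rpow_pos_of_pos hr0 _
      have hx1 : x < 1 := Real.rpow_lt_one_of_one_lt_of_neg hr (by linarith)
      set E := ENNReal.ofReal (r-1) * N * ENNReal.ofReal (t^(-(1/p)) * (x / (1-x))) with hE
      have hdE : dstar μ f t ≤ E := by
        have htend : Filter.Tendsto (fun k:ℕ => dstar μ f (r^k * t) + E) Filter.atTop (nhds (0 + E)) :=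
          ((hlim.comp ((tendsto_pow_atTop_atTop_of_one_lt hr).atTop_mul_const ht)).add
            tendsto_const_nhds)
        rw [zero_add] at htend
        refine ge_of_tendsto htend (Filter.Eventually.of_forall fun k => ?_)
        refine (iterate_bound μ f p ht hr k).trans ?_
        rw [hE]
        gcongr
        exact geom_bound hp0 ht hr k
      have hkey : ENNReal.ofReal (t^(1/p)) * ENNReal.ofReal (r-1)
            * ENNReal.ofReal (t^(-(1/p)) * (x/(1-x)))
          = ENNReal.ofReal ((r-1)*(x/(1-x))) := by
        rw [← ENNReal.ofReal_mul (by positivity : (0:ℝ) ≤ t^(1/p)),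
          ← ENNReal.ofReal_mul (mul_nonneg (by positivity) (by linarith))]
        congr 1
        have h1 : t^(1/p) * t^(-(1/p)) = 1 := by
          rw [← Real.rpow_add ht]; simp
        calc t^(1/p) * (r-1) * (t^(-(1/p)) * (x/(1-x)))
            = (t^(1/p) * t^(-(1/p))) * ((r-1)*(x/(1-x))) := by ring
          _ = (r-1)*(x/(1-x)) := by rw [h1, one_mul]
      calc ENNReal.ofReal t ^ (1/p) * dstar μ f t
          ≤ ENNReal.ofReal (t^(1/p)) * E := by
            rw [← ENNReal.ofReal_rpow_of_pos ht]; gcongr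
        _ = ENNReal.ofReal (t^(1/p)) * ENNReal.ofReal (r-1)
              * ENNReal.ofReal (t^(-(1/p)) * (x/(1-x))) * N := by rw [hE]; ring
        _ = ENNReal.ofReal ((r-1)*(x/(1-x))) * N := by rw [hkey]
    have htendC : Filter.Tendsto
        (fun r : ℝ => ENNReal.ofReal ((r-1) * (r^(-(1/p)) / (1 - r^(-(1/p))))) * N)
        (nhdsWithin 1 (Set.Ioi 1)) (nhds (ENNReal.ofReal p * N)) :=
      ENNReal.Tendsto.mul_const (ENNReal.tendsto_ofReal (C_tendsto hp)) (Or.inr hNtop)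
    exact ge_of_tendsto htendC (Filter.eventually_of_mem self_mem_nhdsWithin
      fun r hr => hmain r hr)
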